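/- Under the assumptions on H, ℓ, s and u in the context: for t ∈ (0, ℓ) define the point q₀(t) = (t + (s(t) − H·t)/H, u(t) − (1/H)·√(1 − (s(t) − H·t)²)) ∈ ℝ². Then the point (t, u(t)) lies on the circle of radius 1/H centered at q₀(t), i.e. the Euclidean distance from (t, u(t)) to q₀(t) equals 1/H, and every point p = (p₁, p₂) of the closed disc of radius 1/H centered at q₀(t) with p₁ ∈ [0, ℓ] satisfies p₂ ≤ u(p₁); that is, the closed disc of radius 1/H tangent to the graph of u at (t, u(t)) from below lies, within the strip [0, ℓ] × ℝ, entirely in the subgraph of u. -/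

import Mathlib

open Set intervalIntegral

set_option maxHeartbeats 1000000

private lemma aux_psi_mono {x y : ℝ} (hx : -1 < x) (hy : y < 1) (hxy : x ≤ y) :
    x / Real.sqrt (1 - x ^ 2) ≤ y / Real.sqrt (1 - y ^ 2) := by
  have hx1 : x < 1 := lt_of_le_of_lt hxy hy
  have hy1 : -1 < y := lt_of_lt_of_le hx hxy
  have hxsq : 0 < 1 - x ^ 2 := by nlinarith
  have hysq : 0 < 1 - y ^ 2 := by nlinarith
  have hA : 0 < Real.sqrt (1 - x ^ 2) := Real.sqrt_pos.mpr hxsq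
  have hB : 0 < Real.sqrt (1 - y ^ 2) := Real.sqrt_pos.mpr hysq
  rw [div_le_div_iff₀ hA hB]
  rcases le_or_gt x 0 with hx0 | hx0
  · rcases le_or_gt 0 y with hy0 | hy0
    · have h1 : x * Real.sqrt (1 - y ^ 2) ≤ 0 := mul_nonpos_of_nonpos_of_nonneg hx0 hB.le
      have h2 : 0 ≤ y * Real.sqrt (1 - x ^ 2) := mul_nonneg hy0 hA.le
      linarith
    · have hAB : Real.sqrt (1 - x ^ 2) ≤ Real.sqrt (1 - y ^ 2) := by
        apply Real.sqrt_le_sqrt; nlinarith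
      calc x * Real.sqrt (1 - y ^ 2) ≤ x * Real.sqrt (1 - x ^ 2) :=
            mul_le_mul_of_nonpos_left hAB hx0
        _ ≤ y * Real.sqrt (1 - x ^ 2) := mul_le_mul_of_nonneg_right hxy hA.le
  · have hBA : Real.sqrt (1 - y ^ 2) ≤ Real.sqrt (1 - x ^ 2) := by
      apply Real.sqrt_le_sqrt; nlinarith
    calc x * Real.sqrt (1 - y ^ 2) ≤ y * Real.sqrt (1 - y ^ 2) :=
          mul_le_mul_of_nonneg_right hxy hB.le
      _ ≤ y * Real.sqrt (1 - x ^ 2) :=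
          mul_le_mul_of_nonneg_left hBA (le_of_lt (lt_of_lt_of_le hx0 hxy))

/-- **Proposition 6.8 of the paper (in graph form).** For every `t ∈ (0, ℓ)`, the
point `(t, u(t))` lies on the circle of radius `1/H` centered at
`q₀(t) = (t + (s(t)−Ht)/H, u(t) − (1/H)√(1−(s(t)−Ht)²))`, and the closed disc of
radius `1/H` centered at `q₀(t)` lies, within the strip `[0, ℓ] × ℝ`, entirely in
the subgraph of `u`. -/
theorem cantor_profile_interior_tangent_ball
    (H ℓ : ℝ) (hH : 0 < H) (hℓ : 0 < ℓ) (hHℓ : H * ℓ < 2)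
    (s : ℝ → ℝ) (hscont : Continuous s) (hsmono : Monotone s)
    (hs0 : s 0 = 0) (hsℓ : s ℓ = H * ℓ)
    (hsym : ∀ t ∈ Set.Icc (0 : ℝ) ℓ, s t + s (ℓ - t) = H * ℓ)
    (hgt : ∀ t ∈ Set.Ioo (0 : ℝ) (ℓ / 2), H * t < s t)
    (hbd : ∀ t ∈ Set.Icc (0 : ℝ) ℓ, |s t - H * t| ≤ H * ℓ / 2)
    (u : ℝ → ℝ)
    (hu : ∀ t, u t = ∫ r in (0 : ℝ)..t,
      (s r - H * r) / Real.sqrt (1 - (s r - H * r) ^ 2)) :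
    ∀ t ∈ Set.Ioo (0 : ℝ) ℓ,
      Real.sqrt ((t - (t + (s t - H * t) / H)) ^ 2 +
          (u t - (u t - (1 / H) * Real.sqrt (1 - (s t - H * t) ^ 2))) ^ 2) = 1 / H ∧
      ∀ p₁ p₂ : ℝ,
        Real.sqrt ((p₁ - (t + (s t - H * t) / H)) ^ 2 +
            (p₂ - (u t - (1 / H) * Real.sqrt (1 - (s t - H * t) ^ 2))) ^ 2) ≤ 1 / H →
        p₁ ∈ Set.Icc (0 : ℝ) ℓ →
        p₂ ≤ u p₁ := by
  have hc : (0 : ℝ) < 1 / H := by positivity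
  have hfc : Continuous fun r : ℝ => s r - H * r := by fun_prop
  have hfsq : ∀ r ∈ Icc (0 : ℝ) ℓ, (s r - H * r) ^ 2 < 1 := by
    intro r hr
    have h := abs_le.mp (hbd r hr)
    nlinarith [h.1, h.2, hr.1, hr.2, mul_pos hH hℓ]
  set G : ℝ → ℝ := fun r => (s r - H * r) / Real.sqrt (1 - (s r - H * r) ^ 2) with hG
  have hGcontAt : ∀ x ∈ Icc (0 : ℝ) ℓ, ContinuousAt G x := by
    intro x hx
    have hpos : 0 < 1 - (s x - H * x) ^ 2 := by nlinarith [hfsq x hx]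
    have h1 : ContinuousAt (fun r => 1 - (s r - H * r) ^ 2) x := by fun_prop
    exact ContinuousAt.div hfc.continuousAt
      (Real.continuous_sqrt.continuousAt.comp h1)
      (ne_of_gt (Real.sqrt_pos.mpr hpos))
  have hGint : ∀ a b : ℝ, a ∈ Icc (0 : ℝ) ℓ → b ∈ Icc (0 : ℝ) ℓ →
      IntervalIntegrable G MeasureTheory.volume a b := by
    intro a b ha hb
    apply ContinuousOn.intervalIntegrable
    intro x hx
    have hx' : x ∈ Icc (0 : ℝ) ℓ := by
      have h1 : (0 : ℝ) ≤ a ⊓ b := le_min ha.1 hb.1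
      have h2 : a ⊔ b ≤ ℓ := max_le ha.2 hb.2
      exact ⟨le_trans h1 hx.1, le_trans hx.2 h2⟩
    exact (hGcontAt x hx').continuousWithinAt
  have hGmeas : ∀ x : ℝ, StronglyMeasurableAtFilter G (nhds x) MeasureTheory.volume := by
    have hGm : Measurable G := by
      apply Measurable.div hfc.measurable
      exact (Real.continuous_sqrt.comp (by fun_prop)).measurable
    exact fun x => hGm.stronglyMeasurable.stronglyMeasurableAtFilter
  have h0mem : (0 : ℝ) ∈ Icc (0 : ℝ) ℓ := ⟨le_refl _, hℓ.le⟩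
  have huderiv : ∀ x ∈ Icc (0 : ℝ) ℓ, HasDerivAt u (G x) x := by
    intro x hx
    have h := intervalIntegral.integral_hasDerivAt_right (hGint 0 x h0mem hx)
      (hGmeas x) (hGcontAt x hx)
    exact h.congr_of_eventuallyEq (Filter.Eventually.of_forall fun y => hu y)
  have huFTC : ∀ a b : ℝ, a ∈ Icc (0 : ℝ) ℓ → b ∈ Icc (0 : ℝ) ℓ →
      u b - u a = ∫ r in a..b, G r := by
    intro a b ha hb
    rw [hu a, hu b]
    exact intervalIntegral.integral_interval_sub_left (hGint 0 b h0mem hb)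
      (hGint 0 a h0mem ha)
  have habs : ∀ y : ℝ, y ^ 2 < (1 / H) ^ 2 → -(1 / H) < y ∧ y < 1 / H := by
    intro y hy
    constructor
    · nlinarith [sq_nonneg (y + 1 / H)]
    · nlinarith [sq_nonneg (y - 1 / H)]
  intro t ht
  obtain ⟨ht0, htℓ⟩ := ht
  have htmem : t ∈ Icc (0 : ℝ) ℓ := ⟨ht0.le, htℓ.le⟩
  have hft2 : (s t - H * t) ^ 2 < 1 := hfsq t htmem
  have hft0 : (0 : ℝ) ≤ 1 - (s t - H * t) ^ 2 := by linarith
  set q₁ : ℝ := t + (s t - H * t) / H with hq₁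
  set q₂ : ℝ := u t - 1 / H * Real.sqrt (1 - (s t - H * t) ^ 2) with hq₂
  clear_value q₁ q₂
  have htq₁ : (t - q₁) ^ 2 < (1 / H) ^ 2 := by
    have h1 : (t - q₁) ^ 2 = (s t - H * t) ^ 2 / H ^ 2 := by
      rw [hq₁]; field_simp; ring
    rw [h1]
    rw [div_lt_iff₀ (by positivity)]
    have : (1 / H) ^ 2 * H ^ 2 = 1 := by field_simp
    rw [this]; exact hft2
  have hsmt : H * q₁ = s t := by rw [hq₁]; field_simp; ring
  -- pointwise comparison of derivatives
  have hcomp : ∀ r ∈ Icc (0 : ℝ) ℓ, (r - q₁) ^ 2 < (1 / H) ^ 2 →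
      ((t ≤ r → (q₁ - r) / Real.sqrt ((1 / H) ^ 2 - (r - q₁) ^ 2) ≤ G r) ∧
       (r ≤ t → G r ≤ (q₁ - r) / Real.sqrt ((1 / H) ^ 2 - (r - q₁) ^ 2))) := by
    intro r hr hrq
    have ha2 : (H * (q₁ - r)) ^ 2 < 1 := by
      have h := mul_lt_mul_of_pos_left hrq (show (0:ℝ) < H ^ 2 by positivity)
      have h2 : H ^ 2 * (1 / H) ^ 2 = 1 := by field_simp
      calc (H * (q₁ - r)) ^ 2 = H ^ 2 * (r - q₁) ^ 2 := by ring
        _ < H ^ 2 * (1 / H) ^ 2 := h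
        _ = 1 := h2
    have hrw : Real.sqrt ((1 / H) ^ 2 - (r - q₁) ^ 2)
        = Real.sqrt (1 - (H * (q₁ - r)) ^ 2) / H := by
      have h1 : (1 / H) ^ 2 - (r - q₁) ^ 2 = (1 - (H * (q₁ - r)) ^ 2) / H ^ 2 := by
        field_simp; ring
      rw [h1, Real.sqrt_div (by nlinarith) (H ^ 2), Real.sqrt_sq hH.le]
    have h2 : (q₁ - r) / (Real.sqrt (1 - (H * (q₁ - r)) ^ 2) / H)
        = (H * (q₁ - r)) / Real.sqrt (1 - (H * (q₁ - r)) ^ 2) := by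
      rw [div_div_eq_mul_div]; ring_nf
    have hfr2 : (s r - H * r) ^ 2 < 1 := hfsq r hr
    constructor
    · intro htr
      have hle : H * (q₁ - r) ≤ s r - H * r := by
        have := hsmono htr
        nlinarith [hsmt]
      rw [hrw, h2]
      exact aux_psi_mono (by nlinarith) (by nlinarith) hle
    · intro hrt
      have hle : s r - H * r ≤ H * (q₁ - r) := by
        have := hsmono hrt
        nlinarith [hsmt]
      rw [hrw, h2]
      exact aux_psi_mono (by nlinarith) (by nlinarith) hle
  -- equality φ t = u t
  have hφt : q₂ + Real.sqrt ((1 / H) ^ 2 - (t - q₁) ^ 2) = u t := by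
    have h1 : (1 / H) ^ 2 - (t - q₁) ^ 2 = (1 - (s t - H * t) ^ 2) / H ^ 2 := by
      rw [hq₁]; field_simp; ring
    rw [h1, Real.sqrt_div hft0 (H ^ 2), Real.sqrt_sq hH.le, hq₂]
    field_simp
    ring
  -- interior key inequality
  have key : ∀ x ∈ Icc (0 : ℝ) ℓ, (x - q₁) ^ 2 < (1 / H) ^ 2 →
      q₂ + Real.sqrt ((1 / H) ^ 2 - (x - q₁) ^ 2) ≤ u x := by
    intro x hx hxq
    have hxb := habs _ hxq
    have htb := habs _ htq₁
    have hbound : ∀ r ∈ uIcc t x, (r - q₁) ^ 2 < (1 / H) ^ 2 := by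
      intro r hr
      obtain ⟨hr1, hr2⟩ := hr
      have h1 : -(1 / H) < t ⊓ x - q₁ := by
        rcases le_total t x with h | h
        · rw [min_eq_left h]; linarith [htb.1]
        · rw [min_eq_right h]; linarith [hxb.1]
      have h2 : t ⊔ x - q₁ < 1 / H := by
        rcases le_total t x with h | h
        · rw [max_eq_right h]; linarith [hxb.2]
        · rw [max_eq_left h]; linarith [htb.2]
      nlinarith [h1, h2, hr1, hr2]
    have hφderiv : ∀ r ∈ uIcc t x,
        HasDerivAt (fun y => q₂ + Real.sqrt ((1 / H) ^ 2 - (y - q₁) ^ 2))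
          ((q₁ - r) / Real.sqrt ((1 / H) ^ 2 - (r - q₁) ^ 2)) r := by
      intro r hr
      have hpos : 0 < (1 / H) ^ 2 - (r - q₁) ^ 2 := by linarith [hbound r hr]
      have hs0' : Real.sqrt ((1 / H) ^ 2 - (r - q₁) ^ 2) ≠ 0 :=
        ne_of_gt (Real.sqrt_pos.mpr hpos)
      have hd1 : HasDerivAt (fun y => (1 / H) ^ 2 - (y - q₁) ^ 2) (-(2 * (r - q₁))) r := by
        have h := (((hasDerivAt_id r).sub_const q₁).pow 2).const_sub ((1 / H) ^ 2)
        simpa using h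
      have hd2 := (hd1.sqrt (ne_of_gt hpos)).const_add q₂
      have heq : (q₁ - r) / Real.sqrt ((1 / H) ^ 2 - (r - q₁) ^ 2)
          = -(2 * (r - q₁)) / (2 * Real.sqrt ((1 / H) ^ 2 - (r - q₁) ^ 2)) := by
        field_simp; ring
      rw [heq]
      exact hd2
    have hφint : IntervalIntegrable
        (fun r => (q₁ - r) / Real.sqrt ((1 / H) ^ 2 - (r - q₁) ^ 2))
        MeasureTheory.volume t x := by
      apply ContinuousOn.intervalIntegrable
      intro r hr
      have hpos : 0 < (1 / H) ^ 2 - (r - q₁) ^ 2 := by linarith [hbound r hr]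
      apply ContinuousWithinAt.div
      · exact (continuous_const.sub continuous_id).continuousWithinAt
      · exact (Real.continuous_sqrt.comp (by fun_prop)).continuousWithinAt
      · exact ne_of_gt (Real.sqrt_pos.mpr hpos)
    have hφFTC := intervalIntegral.integral_eq_sub_of_hasDerivAt hφderiv hφint
    have hIccsub : ∀ r ∈ uIcc t x, r ∈ Icc (0:ℝ) ℓ := by
      intro r hr
      exact ⟨le_trans (le_min htmem.1 hx.1) hr.1, le_trans hr.2 (max_le htmem.2 hx.2)⟩
    rcases le_total t x with hle | hle
    · have hmono : (∫ r in t..x, (q₁ - r) / Real.sqrt ((1 / H) ^ 2 - (r - q₁) ^ 2))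
          ≤ ∫ r in t..x, G r := by
        apply intervalIntegral.integral_mono_on hle hφint (hGint t x htmem hx)
        intro r hr
        have hr' : r ∈ uIcc t x := by rw [uIcc_of_le hle]; exact hr
        exact (hcomp r (hIccsub r hr') (hbound r hr')).1 hr.1
      have hu1 := huFTC t x htmem hx
      linarith [hφFTC, hmono, hφt, hu1]
    · have hmono : (∫ r in x..t, G r)
          ≤ ∫ r in x..t, (q₁ - r) / Real.sqrt ((1 / H) ^ 2 - (r - q₁) ^ 2) := by
        apply intervalIntegral.integral_mono_on hle (hGint x t hx htmem) hφint.symm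
        intro r hr
        have hr' : r ∈ uIcc t x := by rw [uIcc_comm, uIcc_of_le hle]; exact hr
        exact (hcomp r (hIccsub r hr') (hbound r hr')).2 hr.2
      have hu1 := huFTC x t hx htmem
      have hsym' : (∫ r in x..t, (q₁ - r) / Real.sqrt ((1 / H) ^ 2 - (r - q₁) ^ 2))
          = -(∫ r in t..x, (q₁ - r) / Real.sqrt ((1 / H) ^ 2 - (r - q₁) ^ 2)) :=
        intervalIntegral.integral_symm t x
      linarith [hφFTC, hmono, hφt, hu1, hsym']
  -- closed (boundary included) key inequality
  have key' : ∀ x ∈ Icc (0 : ℝ) ℓ, (x - q₁) ^ 2 ≤ (1 / H) ^ 2 →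
      q₂ + Real.sqrt ((1 / H) ^ 2 - (x - q₁) ^ 2) ≤ u x := by
    intro x hx hxq
    rcases lt_or_eq_of_le hxq with hlt | heq
    · exact key x hx hlt
    · have hz : Real.sqrt ((1 / H) ^ 2 - (x - q₁) ^ 2) = 0 := by
        rw [heq, sub_self, Real.sqrt_zero]
      rw [hz, add_zero]
      have htb := habs _ htq₁
      have hne : t ≠ x := by
        intro h; rw [← h] at heq; exact absurd heq (ne_of_lt htq₁)
      have hcontx : ContinuousAt (fun y => u y - Real.sqrt ((1 / H) ^ 2 - (y - q₁) ^ 2)) x := by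
        apply ContinuousAt.sub (huderiv x hx).continuousAt
        exact Real.continuous_sqrt.continuousAt.comp (by fun_prop)
      rcases lt_or_gt_of_ne hne with htx | htx
      · -- t < x, so x - q₁ = 1/H
        have hxq1 : x - q₁ = 1 / H := by
          rcases (sq_eq_sq_iff_eq_or_eq_neg (R := ℝ)).mp heq with h | h
          · exact h
          · exfalso; nlinarith [htb.1]
        have hclos : x ∈ closure (Ioo t x) := by
          rw [closure_Ioo (ne_of_lt htx)]; exact ⟨htx.le, le_refl x⟩
        haveI : (nhdsWithin x (Ioo t x)).NeBot := mem_closure_iff_nhdsWithin_neBot.mp hclos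
        have hev : ∀ y ∈ Ioo t x, q₂ ≤ u y - Real.sqrt ((1 / H) ^ 2 - (y - q₁) ^ 2) := by
          intro y hy
          have hy' : y ∈ Icc (0 : ℝ) ℓ := ⟨le_trans htmem.1 hy.1.le, le_trans hy.2.le hx.2⟩
          have hyq : (y - q₁) ^ 2 < (1 / H) ^ 2 := by nlinarith [htb.1, hy.1, hy.2, hxq1]
          linarith [key y hy' hyq]
        have htend : Filter.Tendsto (fun y => u y - Real.sqrt ((1 / H) ^ 2 - (y - q₁) ^ 2))
            (nhdsWithin x (Ioo t x)) (nhds (u x - 0)) := by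
          rw [← hz]
          exact hcontx.continuousWithinAt.tendsto
        have := ge_of_tendsto htend (Filter.eventually_of_mem self_mem_nhdsWithin hev)
        linarith
      · -- x < t, so x - q₁ = -(1/H)
        have hxq1 : x - q₁ = -(1 / H) := by
          rcases (sq_eq_sq_iff_eq_or_eq_neg (R := ℝ)).mp heq with h | h
          · exfalso; nlinarith [htb.2]
          · exact h
        have hclos : x ∈ closure (Ioo x t) := by
          rw [closure_Ioo htx.ne]; exact ⟨le_refl x, htx.le⟩
        haveI : (nhdsWithin x (Ioo x t)).NeBot := mem_closure_iff_nhdsWithin_neBot.mp hclos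
        have hev : ∀ y ∈ Ioo x t, q₂ ≤ u y - Real.sqrt ((1 / H) ^ 2 - (y - q₁) ^ 2) := by
          intro y hy
          have hy' : y ∈ Icc (0 : ℝ) ℓ := ⟨le_trans hx.1 hy.1.le, le_trans hy.2.le htmem.2⟩
          have hyq : (y - q₁) ^ 2 < (1 / H) ^ 2 := by nlinarith [htb.2, hy.1, hy.2, hxq1]
          linarith [key y hy' hyq]
        have htend : Filter.Tendsto (fun y => u y - Real.sqrt ((1 / H) ^ 2 - (y - q₁) ^ 2))
            (nhdsWithin x (Ioo x t)) (nhds (u x - 0)) := by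
          rw [← hz]
          exact hcontx.continuousWithinAt.tendsto
        have := ge_of_tendsto htend (Filter.eventually_of_mem self_mem_nhdsWithin hev)
        linarith
  constructor
  · -- on-circle computation
    have h1 : t - q₁ = -(s t - H * t) / H := by rw [hq₁]; ring
    have h2 : u t - q₂ = 1 / H * Real.sqrt (1 - (s t - H * t) ^ 2) := by rw [hq₂]; ring
    have hsq : Real.sqrt (1 - (s t - H * t) ^ 2) ^ 2 = 1 - (s t - H * t) ^ 2 :=
      Real.sq_sqrt hft0
    have hA : (t - q₁) ^ 2 + (u t - q₂) ^ 2 = (1 / H) ^ 2 := by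
      rw [h1, h2, mul_pow, hsq]
      field_simp
      ring
    rw [hA, Real.sqrt_sq hc.le]
  · intro p₁ p₂ hdist hp
    have h0 : (0 : ℝ) ≤ (p₁ - q₁) ^ 2 + (p₂ - q₂) ^ 2 := by positivity
    have hD : (p₁ - q₁) ^ 2 + (p₂ - q₂) ^ 2 ≤ (1 / H) ^ 2 := by
      have hm := mul_self_le_mul_self
        (Real.sqrt_nonneg ((p₁ - q₁) ^ 2 + (p₂ - q₂) ^ 2)) hdist
      nlinarith [Real.sq_sqrt h0, hm]
    have h1 : (p₁ - q₁) ^ 2 ≤ (1 / H) ^ 2 := by nlinarith [sq_nonneg (p₂ - q₂)]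
    have h2 : p₂ - q₂ ≤ Real.sqrt ((1 / H) ^ 2 - (p₁ - q₁) ^ 2) := by
      have h3 : (p₂ - q₂) ^ 2 ≤ (1 / H) ^ 2 - (p₁ - q₁) ^ 2 := by linarith
      calc p₂ - q₂ ≤ |p₂ - q₂| := le_abs_self _
        _ = Real.sqrt ((p₂ - q₂) ^ 2) := (Real.sqrt_sq_eq_abs _).symm
        _ ≤ _ := Real.sqrt_le_sqrt h3
    linarith [key' p₁ hp h1, h2]
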